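/- Let ν ≠ 1 be sufficiently close to 1. Suppose ρ : (0,∞) → (0,∞) satisfies ρ(ξ) ≃ ξ^{−1/2} for 0 < ξ ≤ 1 and ρ(ξ) ≃ ξ^{1/2} for ξ ≥ 1, and suppose φ₀(·;γ), φ₁(·;γ) are, for every γ > 0, solutions of y'' + γ τ^{2(1/ν−1)} y = 0 satisfying: φ₀(τ;γ) = γ^{ν/4} τ (1 + O(γ τ^{2/ν})) and φ₁(τ;γ) = γ^{−ν/4}(1 + O(γ^{ν/2} τ)) for 0 < γ^{1/2} τ^{1/ν} ≤ 1, and |φ_j(τ;γ)| ≲ γ^{−1/4} τ^{−(1/ν−1)/2} (j = 0,1) for γ^{1/2} τ^{1/ν} ≥ 1. Define λ̃(τ) = (ντ)^{−(1/ν−1)} and H_c(τ,σ,ξ) = λ̃(τ)^{5/2} ρ(ξ)^{−1/2} [φ₁(τ; ξτ^{−2(1/ν−1)}) φ₀(σ; ξτ^{−2(1/ν−1)}) − φ₀(τ; ξτ^{−2(1/ν−1)}) φ₁(σ; ξτ^{−2(1/ν−1)})] λ̃(σ)^{−5/2} ρ((σ/τ)^{2(1/ν−1)} ξ)^{1/2}.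 Then for all 1 ≤ τ ≤ σ and ξ > 0: |H_c(τ,σ,ξ)| ≲ (σ/τ)^{(7/2)|1/ν−1|} ξ^{−1/2} if τ ξ^{1/2} ≥ 1 and σ ξ^{1/2} ≥ 1; |H_c(τ,σ,ξ)| ≲ (σ/τ)^{(7/2)|1/ν−1|} τ^{(1−ν)/2} ξ^{−(1+ν)/4} if τ ξ^{1/2} ≤ 1 ≤ σ ξ^{1/2}; and |H_c(τ,σ,ξ)| ≲ (σ/τ)^{(7/2)|1/ν−1|} σ if τ ξ^{1/2} ≤ 1 and σ ξ^{1/2} ≤ 1. -/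

import Mathlib

set_option maxHeartbeats 1000000

noncomputable section

open Real

/-- `λ̃(τ) = (ντ)^{-(1/ν-1)}`. -/
def lamt (ν τ : ℝ) : ℝ := (ν * τ) ^ (-(1 / ν - 1))

/-- The kernel `H_c(τ,σ,ξ)` of the solution operator for the transport equation,
built by variation of constants along the characteristics from the fundamental system
`Φ₀(γ,·), Φ₁(γ,·)` and the spectral density `ρ`. -/
def Hker (ν : ℝ) (ρ : ℝ → ℝ) (Φ₀ Φ₁ : ℝ → ℝ → ℝ) (τ σ ξ : ℝ) : ℝ :=
  lamt ν τ ^ ((5 : ℝ) / 2) * (ρ ξ) ^ (-(1 : ℝ) / 2) *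
    (Φ₁ (ξ * τ ^ (-2 * (1 / ν - 1))) τ * Φ₀ (ξ * τ ^ (-2 * (1 / ν - 1))) σ
      - Φ₀ (ξ * τ ^ (-2 * (1 / ν - 1))) τ * Φ₁ (ξ * τ ^ (-2 * (1 / ν - 1))) σ) *
    (lamt ν σ ^ ((5 : ℝ) / 2))⁻¹ * (ρ ((σ / τ) ^ (2 * (1 / ν - 1)) * ξ)) ^ ((1 : ℝ) / 2)

private lemma abs_kernel_le {A1 A2i R1 R2 F S1 M : ℝ} (hA1 : 0 < A1) (hA2i : 0 < A2i)
    (hR1 : 0 < R1) (hR2 : 0 < R2) (hS : A1 * A2i = S1) (hR : R1 * R2 ≤ M) :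
    |A1 * R1 * F * A2i * R2| ≤ S1 * M * |F| := by
  have hS1 : 0 < S1 := hS ▸ mul_pos hA1 hA2i
  have he : |A1 * R1 * F * A2i * R2| = (A1 * A2i) * (R1 * R2) * |F| := by
    rw [abs_mul, abs_mul, abs_mul, abs_mul, abs_of_pos hA1, abs_of_pos hR1,
      abs_of_pos hA2i, abs_of_pos hR2]
    ring
  rw [he, hS]
  exact mul_le_mul_of_nonneg_right (mul_le_mul_of_nonneg_left hR hS1.le) (abs_nonneg F)

private lemma assemble {K s F X D2 e₁ e₂ E B : ℝ} (hK : 0 ≤ K) (hs : 1 ≤ s)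
    (hF : |F| ≤ D2 * (s ^ e₂ * X)) (hB : B ≤ K * s ^ e₁ * |F|)
    (hX : 0 ≤ X) (hD2 : 0 ≤ D2) (he : e₁ + e₂ ≤ E) :
    B ≤ K * D2 * s ^ E * X := by
  have hs0 : (0:ℝ) < s := lt_of_lt_of_le one_pos hs
  have h1 : B ≤ K * s ^ e₁ * (D2 * (s ^ e₂ * X)) :=
    hB.trans (mul_le_mul_of_nonneg_left hF (by positivity))
  have h3 : s ^ e₁ * s ^ e₂ = s ^ (e₁ + e₂) := (Real.rpow_add hs0 _ _).symm
  have h4 : s ^ (e₁ + e₂) ≤ s ^ E := Real.rpow_le_rpow_of_exponent_le hs he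
  calc B ≤ K * s ^ e₁ * (D2 * (s ^ e₂ * X)) := h1
    _ = K * D2 * (s ^ e₁ * s ^ e₂) * X := by ring
    _ = K * D2 * s ^ (e₁ + e₂) * X := by rw [h3]
    _ ≤ K * D2 * s ^ E * X := by
        exact mul_le_mul_of_nonneg_right
          (mul_le_mul_of_nonneg_left h4 (by positivity)) hX

/-- **Lemma 3.8**: bounds for the kernel `H_c`. -/
theorem kernel_Hc_bounds :
    ∃ ε₀ > (0 : ℝ), ∀ ν : ℝ, ν ≠ 1 → |ν - 1| < ε₀ →
    ∀ ρ : ℝ → ℝ, ∀ c₁ c₂ : ℝ, 0 < c₁ →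
      (∀ ξ : ℝ, 0 < ξ → ξ ≤ 1 →
        c₁ * ξ ^ (-(1 : ℝ) / 2) ≤ ρ ξ ∧ ρ ξ ≤ c₂ * ξ ^ (-(1 : ℝ) / 2)) →
      (∀ ξ : ℝ, 1 ≤ ξ →
        c₁ * ξ ^ ((1 : ℝ) / 2) ≤ ρ ξ ∧ ρ ξ ≤ c₂ * ξ ^ ((1 : ℝ) / 2)) →
    ∀ Φ₀ Φ₁ : ℝ → ℝ → ℝ, ∀ C₀ : ℝ,
      -- `Φⱼ(γ,·)` solve `y'' + γτ^{2(1/ν-1)}y = 0`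
      (∀ γ > (0 : ℝ), ∀ τ > (0 : ℝ),
        deriv (deriv (Φ₀ γ)) τ + γ * τ ^ (2 * (1 / ν - 1)) * Φ₀ γ τ = 0 ∧
        deriv (deriv (Φ₁ γ)) τ + γ * τ ^ (2 * (1 / ν - 1)) * Φ₁ γ τ = 0) →
      -- small-argument asymptotics
      (∀ γ > (0 : ℝ), ∀ τ > (0 : ℝ), γ ^ ((1 : ℝ) / 2) * τ ^ (1 / ν) ≤ 1 →
        |Φ₀ γ τ - γ ^ (ν / 4) * τ| ≤ C₀ * (γ ^ (ν / 4) * τ) * (γ * τ ^ (2 / ν)) ∧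
        |Φ₁ γ τ - γ ^ (-ν / 4)| ≤ C₀ * γ ^ (-ν / 4) * (γ ^ (ν / 2) * τ)) →
      -- large-argument bounds
      (∀ γ > (0 : ℝ), ∀ τ > (0 : ℝ), 1 ≤ γ ^ ((1 : ℝ) / 2) * τ ^ (1 / ν) →
        |Φ₀ γ τ| ≤ C₀ * γ ^ (-(1 : ℝ) / 4) * τ ^ (-(1 / ν - 1) / 2) ∧
        |Φ₁ γ τ| ≤ C₀ * γ ^ (-(1 : ℝ) / 4) * τ ^ (-(1 / ν - 1) / 2)) →
    ∃ C : ℝ, ∀ τ σ ξ : ℝ, 1 ≤ τ → τ ≤ σ → 0 < ξ →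
      (1 ≤ τ * ξ ^ ((1 : ℝ) / 2) → 1 ≤ σ * ξ ^ ((1 : ℝ) / 2) →
        |Hker ν ρ Φ₀ Φ₁ τ σ ξ|
          ≤ C * (σ / τ) ^ ((7 : ℝ) / 2 * |1 / ν - 1|) * ξ ^ (-(1 : ℝ) / 2)) ∧
      (τ * ξ ^ ((1 : ℝ) / 2) ≤ 1 → 1 ≤ σ * ξ ^ ((1 : ℝ) / 2) →
        |Hker ν ρ Φ₀ Φ₁ τ σ ξ|
          ≤ C * (σ / τ) ^ ((7 : ℝ) / 2 * |1 / ν - 1|) * τ ^ ((1 - ν) / 2)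
            * ξ ^ (-(1 + ν) / 4)) ∧
      (τ * ξ ^ ((1 : ℝ) / 2) ≤ 1 → σ * ξ ^ ((1 : ℝ) / 2) ≤ 1 →
        |Hker ν ρ Φ₀ Φ₁ τ σ ξ|
          ≤ C * (σ / τ) ^ ((7 : ℝ) / 2 * |1 / ν - 1|) * σ) := by
  refine ⟨1/2, by norm_num, ?_⟩
  intro ν hν1 hνe ρ c₁ c₂ hc₁ hρs hρl Φ₀ Φ₁ C₀ _hode hsm hlg
  obtain ⟨hνe1, hνe2⟩ := abs_lt.mp hνe
  have hν0 : 0 < ν := by linarith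
  have hC₀ : 0 ≤ C₀ := by
    have h := (hlg 1 one_pos 1 one_pos (by norm_num)).1
    simp only [one_rpow, mul_one] at h
    exact (abs_nonneg _).trans h
  have hρone := hρs 1 one_pos le_rfl
  rw [one_rpow, mul_one, mul_one] at hρone
  have hc₂ : 0 < c₂ := by linarith [hρone.1, hρone.2]
  simp only [Hker, lamt]
  set a : ℝ := 1 / ν - 1 with ha
  have hinv : 1 / ν = 1 + a := by rw [ha]; ring
  have hνa : ν * (1 + a) = 1 := by rw [ha]; field_simp; ring
  have haν : a * ν = 1 - ν := by rw [ha]; field_simp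
  set D : ℝ := 1 + C₀ with hD
  have hD1 : (1:ℝ) ≤ D := by rw [hD]; linarith
  have hD0 : (0:ℝ) < D := by linarith
  set K : ℝ := (c₂ / c₁) ^ ((1:ℝ)/2) with hK
  have hK0 : (0:ℝ) ≤ K := Real.rpow_nonneg (by positivity) _
  refine ⟨K * (2 * D ^ 2), ?_⟩
  intro τ σ ξ hτ1 hτσ hξ0
  have hτ0 : (0:ℝ) < τ := lt_of_lt_of_le one_pos hτ1
  have hσ0 : (0:ℝ) < σ := lt_of_lt_of_le hτ0 hτσ
  have hσ1 : (1:ℝ) ≤ σ := hτ1.trans hτσ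
  set s : ℝ := σ / τ with hsdef
  have hs1 : (1:ℝ) ≤ s := (one_le_div hτ0).mpr hτσ
  have hs0 : (0:ℝ) < s := lt_of_lt_of_le one_pos hs1
  set γ : ℝ := ξ * τ ^ (-2 * a) with hγdef
  have hγ0 : (0:ℝ) < γ := mul_pos hξ0 (Real.rpow_pos_of_pos hτ0 _)
  set ξ' : ℝ := s ^ (2 * a) * ξ with hξ'def
  have hξ'0 : (0:ℝ) < ξ' := mul_pos (Real.rpow_pos_of_pos hs0 _) hξ0
  set Fv : ℝ := Φ₁ γ τ * Φ₀ γ σ - Φ₀ γ τ * Φ₁ γ σ with hFv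
  clear_value Fv ξ' γ s K D a
  -- logarithm facts
  have hLτ : 0 ≤ log τ := log_nonneg hτ1
  have hLσ : 0 ≤ log σ := log_nonneg hσ1
  have hLs : 0 ≤ log s := log_nonneg hs1
  have hLsd : log s = log σ - log τ := by rw [hsdef, log_div hσ0.ne' hτ0.ne']
  have hLγ : log γ = log ξ - 2 * a * log τ := by
    rw [hγdef, log_mul hξ0.ne' (Real.rpow_pos_of_pos hτ0 _).ne', log_rpow hτ0]; ring
  have hLξ' : log ξ' = 2 * a * log s + log ξ := by
    rw [hξ'def, log_mul (Real.rpow_pos_of_pos hs0 _).ne' hξ0.ne', log_rpow hs0]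
  have hρpos : ∀ x : ℝ, 0 < x → 0 < ρ x := by
    intro x hx
    rcases le_total x 1 with h | h
    · exact lt_of_lt_of_le (by positivity) (hρs x hx h).1
    · exact lt_of_lt_of_le (by positivity) (hρl x h).1
  -- the lambda-ratio identity
  have hA : ((ν * τ) ^ (-a)) ^ ((5:ℝ) / 2) * (((ν * σ) ^ (-a)) ^ ((5:ℝ) / 2))⁻¹
      = s ^ (5 * a / 2) := by
    rw [Real.rpow_def_of_pos (Real.rpow_pos_of_pos (by positivity : (0:ℝ) < ν * τ) (-a)),
      Real.rpow_def_of_pos (Real.rpow_pos_of_pos (by positivity : (0:ℝ) < ν * σ) (-a)),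
      Real.rpow_def_of_pos hs0, log_rpow (by positivity : (0:ℝ) < ν * τ),
      log_rpow (by positivity : (0:ℝ) < ν * σ), ← exp_neg, ← exp_add]
    congr 1
    rw [log_mul hν0.ne' hτ0.ne', log_mul hν0.ne' hσ0.ne', hLsd]
    ring
  -- the spectral-density ratio bound
  have habs1 : 0 ≤ |a| + a := by linarith [neg_abs_le a]
  have habs2 : 0 ≤ |a| - a := by linarith [le_abs_self a]
  have hRρ : ρ ξ ^ (-(1:ℝ) / 2) * ρ ξ' ^ ((1:ℝ) / 2) ≤ K * s ^ (|a| / 2) := by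
    have main : ∀ e e' : ℝ, c₁ * ξ ^ e ≤ ρ ξ → ρ ξ' ≤ c₂ * ξ' ^ e' →
        -e * log ξ + e' * log ξ' ≤ |a| * log s →
        ρ ξ ^ (-(1:ℝ) / 2) * ρ ξ' ^ ((1:ℝ) / 2) ≤ K * s ^ (|a| / 2) := by
      intro e e' hlow hup hexp
      have hl0 : (0:ℝ) < c₁ * ξ ^ e := by positivity
      have h1 : ρ ξ ^ (-(1:ℝ)/2) ≤ (c₁ * ξ ^ e) ^ (-(1:ℝ)/2) :=
        Real.rpow_le_rpow_of_nonpos hl0 hlow (by norm_num)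
      have h2 : ρ ξ' ^ ((1:ℝ)/2) ≤ (c₂ * ξ' ^ e') ^ ((1:ℝ)/2) :=
        Real.rpow_le_rpow (hρpos ξ' hξ'0).le hup (by norm_num)
      have h3 : ρ ξ ^ (-(1:ℝ)/2) * ρ ξ' ^ ((1:ℝ)/2)
          ≤ (c₁ * ξ ^ e) ^ (-(1:ℝ)/2) * (c₂ * ξ' ^ e') ^ ((1:ℝ)/2) :=
        mul_le_mul h1 h2 (Real.rpow_nonneg (hρpos ξ' hξ'0).le _) (by positivity)
      refine h3.trans ?_
      rw [hK, Real.rpow_def_of_pos hl0,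
        Real.rpow_def_of_pos (by positivity : (0:ℝ) < c₂ * ξ' ^ e'),
        Real.rpow_def_of_pos (by positivity : (0:ℝ) < c₂ / c₁), Real.rpow_def_of_pos hs0,
        ← exp_add, ← exp_add]
      apply exp_le_exp.mpr
      rw [log_mul hc₁.ne' (Real.rpow_pos_of_pos hξ0 _).ne',
        log_mul hc₂.ne' (Real.rpow_pos_of_pos hξ'0 _).ne',
        log_rpow hξ0, log_rpow hξ'0, log_div hc₂.ne' hc₁.ne']
      linarith [hexp]
    have f1 : 0 ≤ (|a| + a) * log s := mul_nonneg habs1 hLs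
    have f2 : 0 ≤ (|a| - a) * log s := mul_nonneg habs2 hLs
    rcases le_total ξ 1 with hξ1 | hξ1 <;> rcases le_total ξ' 1 with hξ'1 | hξ'1
    · refine main _ _ (hρs ξ hξ0 hξ1).1 (hρs ξ' hξ'0 hξ'1).2 ?_
      rw [hLξ']; linarith only [f1]
    · refine main _ _ (hρs ξ hξ0 hξ1).1 (hρl ξ' hξ'1).2 ?_
      rw [hLξ']
      have hLξneg : log ξ ≤ 0 := log_nonpos hξ0.le hξ1
      linarith only [f2, hLξneg]
    · refine main _ _ (hρl ξ hξ1).1 (hρs ξ' hξ'0 hξ'1).2 ?_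
      rw [hLξ']
      have hLξpos : 0 ≤ log ξ := log_nonneg hξ1
      linarith only [f1, hLξpos]
    · refine main _ _ (hρl ξ hξ1).1 (hρl ξ' hξ'1).2 ?_
      rw [hLξ']; linarith only [f2]
  -- the main kernel bound
  have hH : |((ν * τ) ^ (-a)) ^ ((5:ℝ) / 2) * ρ ξ ^ (-(1:ℝ) / 2) * Fv *
      (((ν * σ) ^ (-a)) ^ ((5:ℝ) / 2))⁻¹ * ρ ξ' ^ ((1:ℝ) / 2)|
      ≤ K * s ^ (5 * a / 2 + |a| / 2) * |Fv| := by
    have h := abs_kernel_le (F := Fv)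
      (Real.rpow_pos_of_pos (Real.rpow_pos_of_pos (by positivity : (0:ℝ) < ν * τ) (-a)) _)
      (inv_pos.mpr (Real.rpow_pos_of_pos
        (Real.rpow_pos_of_pos (by positivity : (0:ℝ) < ν * σ) (-a)) _))
      (Real.rpow_pos_of_pos (hρpos ξ hξ0) _)
      (Real.rpow_pos_of_pos (hρpos ξ' hξ'0) _) hA hRρ
    refine h.trans (le_of_eq ?_)
    rw [Real.rpow_add hs0]
    ring
  -- log of the threshold quantity
  have hTlog : ∀ t : ℝ, 0 < t →
      log (γ ^ ((1:ℝ)/2) * t ^ (1/ν)) = log γ / 2 + (1 + a) * log t := by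
    intro t ht
    rw [log_mul (Real.rpow_pos_of_pos hγ0 _).ne' (Real.rpow_pos_of_pos ht _).ne',
      log_rpow hγ0, log_rpow ht, hinv]
    ring
  -- Φ bounds, large argument
  have hPhiL : ∀ t : ℝ, 0 < t → 1 ≤ γ ^ ((1:ℝ)/2) * t ^ (1/ν) →
      |Φ₀ γ t| ≤ D * (γ ^ (-(1:ℝ)/4) * t ^ (-a/2)) ∧
      |Φ₁ γ t| ≤ D * (γ ^ (-(1:ℝ)/4) * t ^ (-a/2)) := by
    intro t ht hcond
    obtain ⟨h₀, h₁⟩ := hlg γ hγ0 t ht hcond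
    have hx : (0:ℝ) ≤ γ ^ (-(1:ℝ)/4) * t ^ (-a/2) := by positivity
    have hCD : C₀ * γ ^ (-(1:ℝ)/4) * t ^ (-a/2) ≤ D * (γ ^ (-(1:ℝ)/4) * t ^ (-a/2)) := by
      rw [show C₀ * γ ^ (-(1:ℝ)/4) * t ^ (-a/2) = C₀ * (γ ^ (-(1:ℝ)/4) * t ^ (-a/2)) from by
        ring]
      exact mul_le_mul_of_nonneg_right (by rw [hD]; linarith) hx
    exact ⟨h₀.trans hCD, h₁.trans hCD⟩
  -- Φ bounds, small argument
  have hPhiS : ∀ t : ℝ, 0 < t → γ ^ ((1:ℝ)/2) * t ^ (1/ν) ≤ 1 →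
      |Φ₀ γ t| ≤ D * (γ ^ (ν/4) * t) ∧ |Φ₀ γ t| ≤ D * γ ^ (-ν/4) ∧
      |Φ₁ γ t| ≤ D * γ ^ (-ν/4) := by
    intro t ht hcond
    obtain ⟨h₀, h₁⟩ := hsm γ hγ0 t ht hcond
    have hb0 : (0:ℝ) ≤ γ ^ ((1:ℝ)/2) * t ^ (1/ν) := by positivity
    have hsq1 : γ * t ^ (2/ν) ≤ 1 := by
      have he : γ * t ^ (2/ν) = (γ ^ ((1:ℝ)/2) * t ^ (1/ν)) ^ (2:ℕ) := by
        rw [pow_two, show γ ^ ((1:ℝ)/2) * t ^ (1/ν) * (γ ^ ((1:ℝ)/2) * t ^ (1/ν))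
            = γ ^ ((1:ℝ)/2) * γ ^ ((1:ℝ)/2) * (t ^ (1/ν) * t ^ (1/ν)) from by ring,
          ← Real.rpow_add hγ0, ← Real.rpow_add ht,
          show (1:ℝ)/2 + 1/2 = 1 from by norm_num,
          show 1/ν + 1/ν = 2/ν from by ring, Real.rpow_one]
      rw [he]
      exact pow_le_one₀ hb0 hcond
    have hsq2 : γ ^ (ν/2) * t ≤ 1 := by
      have he : γ ^ (ν/2) * t = (γ ^ ((1:ℝ)/2) * t ^ (1/ν)) ^ ν := by
        rw [Real.mul_rpow (Real.rpow_nonneg hγ0.le _) (Real.rpow_nonneg ht.le _),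
          ← Real.rpow_mul hγ0.le, ← Real.rpow_mul ht.le,
          show (1:ℝ)/2 * ν = ν/2 from by ring,
          show 1/ν * ν = 1 from by field_simp, Real.rpow_one]
      rw [he]
      exact Real.rpow_le_one hb0 hcond hν0.le
    have hmid : γ ^ (ν/4) * t ≤ γ ^ (-ν/4) := by
      have he : γ ^ (ν/4) * t = γ ^ (-ν/4) * (γ ^ (ν/2) * t) := by
        rw [← mul_assoc, ← Real.rpow_add hγ0, show -ν/4 + ν/2 = ν/4 from by ring]
      rw [he]
      calc γ ^ (-ν/4) * (γ ^ (ν/2) * t) ≤ γ ^ (-ν/4) * 1 :=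
          mul_le_mul_of_nonneg_left hsq2 (Real.rpow_nonneg hγ0.le _)
        _ = γ ^ (-ν/4) := mul_one _
    have hp1 : (0:ℝ) ≤ γ ^ (ν/4) * t := by positivity
    have hΦ₀ : |Φ₀ γ t| ≤ D * (γ ^ (ν/4) * t) := by
      have htri : |Φ₀ γ t| ≤ |Φ₀ γ t - γ ^ (ν/4) * t| + |γ ^ (ν/4) * t| := by
        calc |Φ₀ γ t| = |Φ₀ γ t - γ ^ (ν/4) * t + γ ^ (ν/4) * t| := by congr 1; ring
          _ ≤ _ := abs_add_le _ _
      rw [abs_of_nonneg hp1] at htri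
      have hmul : C₀ * (γ ^ (ν/4) * t) * (γ * t ^ (2/ν)) ≤ C₀ * (γ ^ (ν/4) * t) :=
        mul_le_of_le_one_right (mul_nonneg hC₀ hp1) hsq1
      rw [hD]; linarith only [htri, hmul, h₀]
    refine ⟨hΦ₀, hΦ₀.trans (mul_le_mul_of_nonneg_left hmid hD0.le), ?_⟩
    have hq : (0:ℝ) ≤ γ ^ (-ν/4) := (Real.rpow_pos_of_pos hγ0 _).le
    have htri : |Φ₁ γ t| ≤ |Φ₁ γ t - γ ^ (-ν/4)| + |γ ^ (-ν/4)| := by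
      calc |Φ₁ γ t| = |Φ₁ γ t - γ ^ (-ν/4) + γ ^ (-ν/4)| := by congr 1; ring
        _ ≤ _ := abs_add_le _ _
    rw [abs_of_nonneg hq] at htri
    have hmul : C₀ * γ ^ (-ν/4) * (γ ^ (ν/2) * t) ≤ C₀ * γ ^ (-ν/4) :=
      mul_le_of_le_one_right (mul_nonneg hC₀ hq) hsq2
    rw [hD]; linarith only [htri, hmul, h₁]
  -- decomposition of |Fv|
  have hFsplit : |Fv| ≤ |Φ₁ γ τ| * |Φ₀ γ σ| + |Φ₀ γ τ| * |Φ₁ γ σ| := by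
    rw [hFv]
    calc |Φ₁ γ τ * Φ₀ γ σ - Φ₀ γ τ * Φ₁ γ σ|
        ≤ |Φ₁ γ τ * Φ₀ γ σ| + |Φ₀ γ τ * Φ₁ γ σ| := abs_sub _ _
      _ = _ := by rw [abs_mul, abs_mul]
  -- bridging product identities for linear arithmetic
  have haLs : a * log s = a * log σ - a * log τ := by rw [hLsd]; ring
  have rνt : a * ν * log τ = (1 - ν) * log τ := by rw [haν]
  have rνs : a * ν * log σ = (1 - ν) * log σ := by rw [haν]
  have rνx : a * ν * log ξ = (1 - ν) * log ξ := by rw [haν]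
  have rνl : a * ν * log s = (1 - ν) * log s := by rw [haν]
  -- the two reusable F-bounds
  have hFss : γ ^ ((1:ℝ)/2) * τ ^ (1/ν) ≤ 1 → γ ^ ((1:ℝ)/2) * σ ^ (1/ν) ≤ 1 →
      |Fv| ≤ 2 * D ^ 2 * σ := by
    intro hcτ hcσ
    obtain ⟨hb0τ, hb0τ', hb1τ⟩ := hPhiS τ hτ0 hcτ
    obtain ⟨hb0σ, hb0σ', hb1σ⟩ := hPhiS σ hσ0 hcσ
    have hcan : γ ^ (-ν/4) * γ ^ (ν/4) = 1 := by
      rw [← Real.rpow_add hγ0, show -ν/4 + ν/4 = 0 from by ring, Real.rpow_zero]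
    have h1 := mul_le_mul hb1τ hb0σ (abs_nonneg _) (by positivity)
    have h2 := mul_le_mul hb0τ hb1σ (abs_nonneg _) (by positivity)
    have e1 : D * γ ^ (-ν/4) * (D * (γ ^ (ν/4) * σ)) = D ^ 2 * σ := by
      calc D * γ ^ (-ν/4) * (D * (γ ^ (ν/4) * σ))
          = D ^ 2 * (γ ^ (-ν/4) * γ ^ (ν/4)) * σ := by ring
        _ = D ^ 2 * σ := by rw [hcan]; ring
    have e2 : D * (γ ^ (ν/4) * τ) * (D * γ ^ (-ν/4)) = D ^ 2 * τ := by
      calc D * (γ ^ (ν/4) * τ) * (D * γ ^ (-ν/4))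
          = D ^ 2 * (γ ^ (-ν/4) * γ ^ (ν/4)) * τ := by ring
        _ = D ^ 2 * τ := by rw [hcan]; ring
    have e3 : D ^ 2 * τ ≤ D ^ 2 * σ :=
      mul_le_mul_of_nonneg_left hτσ (by positivity)
    linarith only [hFsplit, h1, h2, e1, e2, e3]
  have hFsl : γ ^ ((1:ℝ)/2) * τ ^ (1/ν) ≤ 1 → 1 ≤ γ ^ ((1:ℝ)/2) * σ ^ (1/ν) →
      |Fv| ≤ 2 * D ^ 2 * (γ ^ (-ν/4) * (γ ^ (-(1:ℝ)/4) * σ ^ (-a/2))) := by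
    intro hcτ hcσ
    obtain ⟨hb0τ, hb0τ', hb1τ⟩ := hPhiS τ hτ0 hcτ
    obtain ⟨hb0σ, hb1σ⟩ := hPhiL σ hσ0 hcσ
    have h1 := mul_le_mul hb1τ hb0σ (abs_nonneg _) (by positivity)
    have h2 := mul_le_mul hb0τ' hb1σ (abs_nonneg _) (by positivity)
    have e1 : D * γ ^ (-ν/4) * (D * (γ ^ (-(1:ℝ)/4) * σ ^ (-a/2)))
        = D ^ 2 * (γ ^ (-ν/4) * (γ ^ (-(1:ℝ)/4) * σ ^ (-a/2))) := by ring
    linarith only [hFsplit, h1, h2, e1]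
  refine ⟨?_, ?_, ?_⟩
  · -- case 1 : both large
    intro hc1 hc2
    have hLc1 : 0 ≤ log τ + log ξ / 2 := by
      have h := log_nonneg hc1
      rw [log_mul hτ0.ne' (Real.rpow_pos_of_pos hξ0 _).ne', log_rpow hξ0] at h
      linarith
    have hcτ : 1 ≤ γ ^ ((1:ℝ)/2) * τ ^ (1/ν) := by
      rw [← log_nonneg_iff (by positivity)]
      rw [hTlog τ hτ0, hLγ]
      linarith
    have hcσ : 1 ≤ γ ^ ((1:ℝ)/2) * σ ^ (1/ν) := by
      refine hcτ.trans ?_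
      exact mul_le_mul_of_nonneg_left
        (Real.rpow_le_rpow hτ0.le hτσ (by positivity : (0:ℝ) ≤ 1/ν))
        (Real.rpow_nonneg hγ0.le _)
    obtain ⟨hb0τ, hb1τ⟩ := hPhiL τ hτ0 hcτ
    obtain ⟨hb0σ, hb1σ⟩ := hPhiL σ hσ0 hcσ
    have heq : γ ^ (-(1:ℝ)/4) * τ ^ (-a/2) * (γ ^ (-(1:ℝ)/4) * σ ^ (-a/2))
        = s ^ (-a/2) * ξ ^ (-(1:ℝ)/2) := by
      rw [Real.rpow_def_of_pos hγ0, Real.rpow_def_of_pos hτ0, Real.rpow_def_of_pos hσ0,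
        Real.rpow_def_of_pos hs0, Real.rpow_def_of_pos hξ0]
      simp only [← exp_add]
      congr 1
      rw [hLγ, hLsd]; ring
    have h1 := mul_le_mul hb1τ hb0σ (abs_nonneg _) (by positivity)
    have h2 := mul_le_mul hb0τ hb1σ (abs_nonneg _) (by positivity)
    have e1 : D * (γ ^ (-(1:ℝ)/4) * τ ^ (-a/2)) * (D * (γ ^ (-(1:ℝ)/4) * σ ^ (-a/2)))
        = D ^ 2 * (s ^ (-a/2) * ξ ^ (-(1:ℝ)/2)) := by
      rw [show D * (γ ^ (-(1:ℝ)/4) * τ ^ (-a/2)) * (D * (γ ^ (-(1:ℝ)/4) * σ ^ (-a/2)))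
          = D ^ 2 * (γ ^ (-(1:ℝ)/4) * τ ^ (-a/2) * (γ ^ (-(1:ℝ)/4) * σ ^ (-a/2))) from by
        ring, heq]
    have hFb : |Fv| ≤ 2 * D ^ 2 * (s ^ (-a/2) * ξ ^ (-(1:ℝ)/2)) := by
      linarith only [hFsplit, h1, h2, e1]
    exact assemble hK0 hs1 hFb hH (by positivity) (by positivity)
      (by rcases abs_cases a with ⟨h, h0⟩ | ⟨h, h0⟩ <;> rw [h] <;> linarith)
  · -- case 2 : small at τ, large at σ
    intro hc1 hc2
    have hLc1 : log τ + log ξ / 2 ≤ 0 := by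
      have h := log_nonpos (by positivity) hc1
      rw [log_mul hτ0.ne' (Real.rpow_pos_of_pos hξ0 _).ne', log_rpow hξ0] at h
      linarith
    have hLc2 : 0 ≤ log σ + log ξ / 2 := by
      have h := log_nonneg hc2
      rw [log_mul hσ0.ne' (Real.rpow_pos_of_pos hξ0 _).ne', log_rpow hξ0] at h
      linarith
    have hcτ : γ ^ ((1:ℝ)/2) * τ ^ (1/ν) ≤ 1 := by
      rw [← log_nonpos_iff (by positivity)]
      rw [hTlog τ hτ0, hLγ]
      linarith
    rcases le_or_gt (γ ^ ((1:ℝ)/2) * σ ^ (1/ν)) 1 with hcσ | hcσ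
    · -- small at σ as well
      have hLcσ : (log ξ - 2 * a * log τ) / 2 + (1 + a) * log σ ≤ 0 := by
        have h := log_nonpos (by positivity) hcσ
        rw [hTlog σ hσ0, hLγ] at h
        linarith
      have hσle : σ ≤ s ^ (-a + |a|/2) * (τ ^ ((1-ν)/2) * ξ ^ (-(1+ν)/4)) := by
        conv_lhs => rw [show σ = exp (log σ) from (exp_log hσ0).symm]
        rw [Real.rpow_def_of_pos hs0, Real.rpow_def_of_pos hτ0, Real.rpow_def_of_pos hξ0,
          ← exp_add, ← exp_add]
        apply exp_le_exp.mpr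
        rcases abs_cases a with ⟨h, h0⟩ | ⟨h, h0⟩ <;> rw [h]
        · -- a ≥ 0, hence ν ≤ 1
          have hν1' : ν ≤ 1 := by
            have := mul_nonneg h0 hν0.le
            linarith only [this, haν]
          have q1 : 0 ≤ a * ν * (log σ + log ξ / 2) :=
            mul_nonneg (mul_nonneg h0 hν0.le) hLc2
          have q2 : 0 ≤ a * (1 - ν) * (log σ - log τ) :=
            mul_nonneg (mul_nonneg h0 (by linarith only [hν1'])) (by linarith only [hLsd, hLs])
          linarith only [hLcσ, q1, q2, haLs, rνt, rνs, rνx]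
        · -- a < 0, hence ν ≥ 1
          have hν1' : 1 ≤ ν := by
            have := mul_nonneg (neg_nonneg.mpr h0.le) hν0.le
            linarith only [this, haν]
          have q1 : 0 ≤ (-a) * log s := mul_nonneg (by linarith only [h0]) hLs
          have q2 : 0 ≤ (ν - 1) * (-(log τ + log ξ / 2)) :=
            mul_nonneg (by linarith only [hν1']) (by linarith only [hLc1])
          linarith only [hLcσ, q1, q2, haLs]
      have hFb : |Fv| ≤ 2 * D ^ 2 * (s ^ (-a + |a|/2) * (τ ^ ((1-ν)/2) * ξ ^ (-(1+ν)/4))) :=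
        (hFss hcτ hcσ).trans (mul_le_mul_of_nonneg_left hσle (by positivity))
      refine (assemble hK0 hs1 hFb hH (by positivity) (by positivity) ?_).trans_eq (by ring)
      rcases abs_cases a with ⟨h, h0⟩ | ⟨h, h0⟩ <;> rw [h] <;> linarith
    · -- large at σ
      have heq : γ ^ (-ν/4) * (γ ^ (-(1:ℝ)/4) * σ ^ (-a/2))
          = s ^ (-a/2) * (τ ^ ((1-ν)/2) * ξ ^ (-(1+ν)/4)) := by
        rw [Real.rpow_def_of_pos hγ0, Real.rpow_def_of_pos hγ0, Real.rpow_def_of_pos hσ0,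
          Real.rpow_def_of_pos hs0, Real.rpow_def_of_pos hτ0, Real.rpow_def_of_pos hξ0]
        simp only [← exp_add]
        congr 1
        rw [hLγ, hLsd]
        linear_combination (log τ / 2) * haν
      have hFb : |Fv| ≤ 2 * D ^ 2 * (s ^ (-a/2) * (τ ^ ((1-ν)/2) * ξ ^ (-(1+ν)/4))) := by
        have h := hFsl hcτ hcσ.le
        rw [heq] at h
        exact h
      refine (assemble hK0 hs1 hFb hH (by positivity) (by positivity) ?_).trans_eq (by ring)
      rcases abs_cases a with ⟨h, h0⟩ | ⟨h, h0⟩ <;> rw [h] <;> linarith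
  · -- case 3 : both small
    intro hc1 hc2
    have hLc1 : log τ + log ξ / 2 ≤ 0 := by
      have h := log_nonpos (by positivity) hc1
      rw [log_mul hτ0.ne' (Real.rpow_pos_of_pos hξ0 _).ne', log_rpow hξ0] at h
      linarith
    have hcτ : γ ^ ((1:ℝ)/2) * τ ^ (1/ν) ≤ 1 := by
      rw [← log_nonpos_iff (by positivity)]
      rw [hTlog τ hτ0, hLγ]
      linarith
    rcases le_or_gt (γ ^ ((1:ℝ)/2) * σ ^ (1/ν)) 1 with hcσ | hcσ
    · have hFb : |Fv| ≤ 2 * D ^ 2 * (s ^ (0:ℝ) * σ) := by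
        rw [Real.rpow_zero, one_mul]
        exact hFss hcτ hcσ
      exact assemble hK0 hs1 hFb hH hσ0.le (by positivity)
        (by rcases abs_cases a with ⟨h, h0⟩ | ⟨h, h0⟩ <;> rw [h] <;> linarith)
    · have hLcσ : 0 ≤ log γ / 2 + (1 + a) * log σ := by
        have h := log_nonneg hcσ.le
        rw [hTlog σ hσ0] at h
        exact h
      have hGσ : γ ^ (-ν/4) * (γ ^ (-(1:ℝ)/4) * σ ^ (-a/2)) ≤ σ := by
        conv_rhs => rw [show σ = exp (log σ) from (exp_log hσ0).symm]
        rw [Real.rpow_def_of_pos hγ0, Real.rpow_def_of_pos hγ0, Real.rpow_def_of_pos hσ0]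
        rw [← exp_add, ← exp_add]
        apply exp_le_exp.mpr
        have p := mul_nonneg (show (0:ℝ) ≤ (1+ν)/2 by linarith only [hν0]) hLcσ
        linarith only [p, rνs]
      have hFb : |Fv| ≤ 2 * D ^ 2 * (s ^ (0:ℝ) * σ) := by
        rw [Real.rpow_zero, one_mul]
        exact (hFsl hcτ hcσ.le).trans (mul_le_mul_of_nonneg_left hGσ (by positivity))
      exact assemble hK0 hs1 hFb hH hσ0.le (by positivity)
        (by rcases abs_cases a with ⟨h, h0⟩ | ⟨h, h0⟩ <;> rw [h] <;> linarith)

end
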